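/- Let J : ℝ^d → ℝ be twice continuously differentiable with ‖∇²J(x) - ∇²J(y)‖ ≤ L₃‖x - y‖ for all x, y. Let θ, h ∈ ℝ^d, g ∈ ℝ^d, H a symmetric matrix, and M > 0, such that ‖g - ∇J(θ)‖ ≤ ε, ‖H - ∇²J(θ)‖ ≤ √(L₃ε), g + Hh + (M/2)‖h‖h = 0, ‖h‖ ≤ (1/2)√(ε/L₃), and M = 30L₃. Then ‖∇J(θ + h)‖ ≤ 6ε. -/

import Mathlib

open scoped RealInnerProductSpace

set_option maxHeartbeats 1000000 in
theorem grad_bound_at_next_iterate (d : ℕ) (hd : 0 < d) (ε L₃ : ℝ)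
    (hε : 0 < ε) (hL : 0 < L₃)
    (J : EuclideanSpace ℝ (Fin d) → ℝ) (hJ : ContDiff ℝ 2 J)
    (Hess : EuclideanSpace ℝ (Fin d) →
      EuclideanSpace ℝ (Fin d) →L[ℝ] EuclideanSpace ℝ (Fin d))
    (hHess : ∀ x, HasFDerivAt (gradient J) (Hess x) x)
    (hLip : ∀ x y, ‖Hess x - Hess y‖ ≤ L₃ * ‖x - y‖)
    (θ h g : EuclideanSpace ℝ (Fin d))
    (H : EuclideanSpace ℝ (Fin d) →L[ℝ] EuclideanSpace ℝ (Fin d))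
    (hHsym : IsSelfAdjoint H) (M : ℝ) (hM : M = 30 * L₃)
    (hg : ‖g - gradient J θ‖ ≤ ε)
    (hHerr : ‖H - Hess θ‖ ≤ Real.sqrt (L₃ * ε))
    (hfoc : g + H h + ((M / 2) * ‖h‖) • h = 0)
    (hsmall : ‖h‖ ≤ (1 / 2) * Real.sqrt (ε / L₃)) :
    ‖gradient J (θ + h)‖ ≤ 6 * ε := by
  have hs0 : (0:ℝ) ≤ ‖h‖ := norm_nonneg h
  -- Taylor remainder bound
  have key : ‖gradient J (θ + h) - gradient J θ - Hess θ h‖ ≤ L₃ / 2 * ‖h‖ ^ 2 := by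
    set f : ℝ → EuclideanSpace ℝ (Fin d) :=
      fun t => gradient J (θ + t • h) - gradient J θ - t • (Hess θ h) with hf
    have hder : ∀ t : ℝ, HasDerivAt f (Hess (θ + t • h) h - Hess θ h) t := by
      intro t
      have h1 : HasDerivAt (fun t : ℝ => θ + t • h) h t := by
        simpa using ((hasDerivAt_id t).smul_const h).const_add θ
      have h2 : HasDerivAt (fun t : ℝ => gradient J (θ + t • h)) (Hess (θ + t • h) h) t :=
        by have := (hHess (θ + t • h)).comp_hasDerivAt t h1; exact this
      have h3 : HasDerivAt (fun t : ℝ => t • (Hess θ h)) (Hess θ h) t := by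
        simpa using (hasDerivAt_id t).smul_const (Hess θ h)
      exact (h2.sub_const (gradient J θ)).sub h3
    have hB : ∀ t : ℝ, HasDerivAt (fun t : ℝ => L₃ / 2 * ‖h‖ ^ 2 * t ^ 2)
        (L₃ * ‖h‖ ^ 2 * t) t := by
      intro t
      have := ((hasDerivAt_pow 2 t).const_mul (L₃ / 2 * ‖h‖ ^ 2))
      refine this.congr_deriv ?_
      rw [show (2:ℕ) - 1 = 1 from rfl]
      push_cast
      ring
    have bound : ∀ t ∈ Set.Ico (0:ℝ) 1,
        ‖Hess (θ + t • h) h - Hess θ h‖ ≤ L₃ * ‖h‖ ^ 2 * t := by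
      intro t ht
      have h1 : ‖Hess (θ + t • h) h - Hess θ h‖ ≤ ‖Hess (θ + t • h) - Hess θ‖ * ‖h‖ := by
        rw [← ContinuousLinearMap.sub_apply]
        exact ContinuousLinearMap.le_opNorm _ h
      have h2 : ‖Hess (θ + t • h) - Hess θ‖ ≤ L₃ * (t * ‖h‖) := by
        have hlip := hLip (θ + t • h) θ
        have heq : θ + t • h - θ = t • h := by abel
        rw [heq, norm_smul, Real.norm_eq_abs, abs_of_nonneg ht.1] at hlip
        linarith
      calc ‖Hess (θ + t • h) h - Hess θ h‖ ≤ ‖Hess (θ + t • h) - Hess θ‖ * ‖h‖ := h1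
        _ ≤ L₃ * (t * ‖h‖) * ‖h‖ := by
            exact mul_le_mul_of_nonneg_right h2 hs0
        _ = L₃ * ‖h‖ ^ 2 * t := by ring
    have hmain := image_norm_le_of_norm_deriv_right_le_deriv_boundary
      (f := f) (f' := fun t => Hess (θ + t • h) h - Hess θ h) (a := 0) (b := 1)
      (fun t _ => (hder t).continuousAt.continuousWithinAt)
      (fun t _ => (hder t).hasDerivWithinAt)
      (by simp [hf]) hB bound
    have h1 := hmain (Set.right_mem_Icc.mpr zero_le_one)
    simpa [hf] using h1
  -- decomposition
  have hdecomp : gradient J (θ + h) =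
      (gradient J (θ + h) - gradient J θ - Hess θ h) + (gradient J θ - g)
        + ((Hess θ - H) h) - ((M / 2) * ‖h‖) • h := by
    have : H h = -(g + ((M / 2) * ‖h‖) • h) := by
      have := hfoc
      linear_combination (norm := module) this
    simp only [ContinuousLinearMap.sub_apply, this]
    module
  -- norm bounds of the pieces
  have hsq : ‖h‖ ^ 2 ≤ ε / L₃ / 4 := by
    have h2 : ‖h‖ ^ 2 ≤ ((1 / 2) * Real.sqrt (ε / L₃)) ^ 2 := by
      apply sq_le_sq' (by linarith) hsmall
    have h3 : ((1 / 2) * Real.sqrt (ε / L₃)) ^ 2 = ε / L₃ / 4 := by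
      rw [mul_pow, Real.sq_sqrt (by positivity)]
      ring
    linarith [h2, h3.le]
  have hLsq : L₃ * ‖h‖ ^ 2 ≤ ε / 4 := by
    have := mul_le_mul_of_nonneg_left hsq hL.le
    calc L₃ * ‖h‖ ^ 2 ≤ L₃ * (ε / L₃ / 4) := this
      _ = ε / 4 := by field_simp
  have hsqrt : Real.sqrt (L₃ * ε) * ‖h‖ ≤ ε / 2 := by
    have h1 : Real.sqrt (L₃ * ε) * ‖h‖ ≤ Real.sqrt (L₃ * ε) * ((1/2) * Real.sqrt (ε / L₃)) :=
      mul_le_mul_of_nonneg_left hsmall (Real.sqrt_nonneg _)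
    have h2 : Real.sqrt (L₃ * ε) * Real.sqrt (ε / L₃) = ε := by
      rw [← Real.sqrt_mul (by positivity)]
      rw [show L₃ * ε * (ε / L₃) = ε ^ 2 by field_simp]
      exact Real.sqrt_sq hε.le
    nlinarith [h1, h2]
  have hterm1 : ‖(Hess θ - H) h‖ ≤ Real.sqrt (L₃ * ε) * ‖h‖ := by
    have h1 := (Hess θ - H).le_opNorm h
    have h2 : ‖Hess θ - H‖ = ‖H - Hess θ‖ := norm_sub_rev _ _
    have : ‖Hess θ - H‖ * ‖h‖ ≤ Real.sqrt (L₃ * ε) * ‖h‖ := by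
      rw [h2]; exact mul_le_mul_of_nonneg_right hHerr hs0
    exact h1.trans this
  have hterm2 : ‖((M / 2) * ‖h‖) • h‖ ≤ 15 * ε / 4 := by
    rw [hM, norm_smul, Real.norm_eq_abs, abs_of_nonneg (by positivity)]
    calc 30 * L₃ / 2 * ‖h‖ * ‖h‖ = 15 * (L₃ * ‖h‖ ^ 2) := by ring
      _ ≤ 15 * (ε / 4) := by linarith
      _ = 15 * ε / 4 := by ring
  have hterm3 : ‖gradient J θ - g‖ ≤ ε := by rw [norm_sub_rev]; exact hg
  have tri : ∀ a b c e : EuclideanSpace ℝ (Fin d),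
      ‖a + b + c - e‖ ≤ ‖a‖ + ‖b‖ + ‖c‖ + ‖e‖ := by
    intro a b c e
    refine (norm_sub_le _ _).trans ?_
    have := (norm_add_le (a + b) c).trans (add_le_add_left (norm_add_le a b) _)
    linarith
  calc ‖gradient J (θ + h)‖
      = ‖(gradient J (θ + h) - gradient J θ - Hess θ h) + (gradient J θ - g)
        + ((Hess θ - H) h) - ((M / 2) * ‖h‖) • h‖ := by rw [← hdecomp]
    _ ≤ ‖gradient J (θ + h) - gradient J θ - Hess θ h‖ + ‖gradient J θ - g‖
        + ‖(Hess θ - H) h‖ + ‖((M / 2) * ‖h‖) • h‖ := tri _ _ _ _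
    _ ≤ L₃ / 2 * ‖h‖ ^ 2 + ε + Real.sqrt (L₃ * ε) * ‖h‖ + 15 * ε / 4 := by
        gcongr
    _ ≤ ε / 8 + ε + ε / 2 + 15 * ε / 4 := by
        have : L₃ / 2 * ‖h‖ ^ 2 ≤ ε / 8 := by linarith
        linarith
    _ ≤ 6 * ε := by linarith
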